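/- Let J be a natural number and a, b : {0,...,J} → ℝ be the coefficients of a linear multistep method, and define the error coefficients C_0 = ∑_{j=0}^J a_j, C_1 = ∑_{j=0}^J j·a_j, and for q ≥ 2, C_q = (1/q!)·∑_{j=0}^J j^q·a_j − (1/(q−2)!)·∑_{j=0}^J j^{q−2}·b_j (with the convention 0^0 = 1). If the method is symmetric, i.e. a_j = a_{J−j} and b_j = b_{J−j} for all 0 ≤ j ≤ J, and if C_i = 0 for every i with 0 ≤ i ≤ 2m, then C_{2m+1} = 0. (Hence a symmetric linear multistep method always has even algebraic order.) -/

import Mathlib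

open Finset

private lemma lmm_choose_aux (m' k : ℕ) :
    ((2*m'+3).choose (k+2)) * (k+2) * (k+1)
      = (2*m'+3) * ((2*m'+2) * ((2*m'+1).choose k)) := by
  have e1 : (2*m'+2) * ((2*m'+1).choose k) = (2*m'+2).choose (k+1) * (k+1) :=
    Nat.add_one_mul_choose_eq (2*m'+1) k
  have e2 : (2*m'+3) * ((2*m'+2).choose (k+1)) = (2*m'+3).choose (k+2) * (k+2) :=
    Nat.add_one_mul_choose_eq (2*m'+2) (k+1)
  calc ((2*m'+3).choose (k+2)) * (k+2) * (k+1)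
      = ((2*m'+3) * ((2*m'+2).choose (k+1))) * (k+1) := by rw [e2]
    _ = (2*m'+3) * ((2*m'+2).choose (k+1) * (k+1)) := by ring
    _ = _ := by rw [← e1]

private lemma lmm_aux (Jr : ℝ) (m' : ℕ) (S T : ℕ → ℝ)
    (keyS : S (2*m'+3) = ∑ k ∈ range (2*m'+3+1),
        (-1:ℝ)^k * Jr^(2*m'+3-k) * ((2*m'+3).choose k) * S k)
    (keyT : T (2*m'+1) = ∑ k ∈ range (2*m'+1+1),
        (-1:ℝ)^k * Jr^(2*m'+1-k) * ((2*m'+1).choose k) * T k)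
    (hS0 : S 0 = 0) (hS1 : S 1 = 0)
    (hSk : ∀ k, 2 ≤ k → k ≤ 2*m'+2 → S k = (k:ℝ)*((k:ℝ)-1) * T (k-2)) :
    S (2*m'+3) = (2*(m':ℝ)+3) * (2*(m':ℝ)+2) * T (2*m'+1) := by
  rw [Finset.sum_range_succ] at keyS keyT
  have hodd3 : (-1:ℝ)^(2*m'+3) = -1 := Odd.neg_one_pow ⟨m'+1, by ring⟩
  have hodd1 : (-1:ℝ)^(2*m'+1) = -1 := Odd.neg_one_pow ⟨m', by ring⟩
  have hlastS : (-1:ℝ)^(2*m'+3) * Jr^(2*m'+3-(2*m'+3)) * ((2*m'+3).choose (2*m'+3))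
      * S (2*m'+3) = - S (2*m'+3) := by
    rw [Nat.sub_self, Nat.choose_self, hodd3]; push_cast; ring
  have hlastT : (-1:ℝ)^(2*m'+1) * Jr^(2*m'+1-(2*m'+1)) * ((2*m'+1).choose (2*m'+1))
      * T (2*m'+1) = - T (2*m'+1) := by
    rw [Nat.sub_self, Nat.choose_self, hodd1]; push_cast; ring
  rw [hlastS] at keyS
  rw [hlastT] at keyT
  have hA : 2 * S (2*m'+3) = ∑ k ∈ range (2*m'+3),
      (-1:ℝ)^k * Jr^(2*m'+3-k) * ((2*m'+3).choose k) * S k := by linarith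
  have hB : 2 * T (2*m'+1) = ∑ k ∈ range (2*m'+1),
      (-1:ℝ)^k * Jr^(2*m'+1-k) * ((2*m'+1).choose k) * T k := by linarith
  -- substitute S k using vanishing order conditions
  have hA2 : 2 * S (2*m'+3) = ∑ k ∈ range (2*m'+3),
      (-1:ℝ)^k * Jr^(2*m'+3-k) * ((2*m'+3).choose k)
        * ((k:ℝ)*((k:ℝ)-1) * T (k-2)) := by
    rw [hA]
    refine Finset.sum_congr rfl fun k hk => ?_
    have hk' : k < 2*m'+3 := mem_range.mp hk
    rcases Nat.lt_or_ge k 2 with h2 | h2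
    · interval_cases k
      · rw [hS0]; norm_num
      · rw [hS1]; norm_num
    · rw [hSk k h2 (by omega)]
  -- shift the sum index by 2
  rw [show 2*m'+3 = (2*m'+2)+1 from by omega, Finset.sum_range_succ'] at hA2
  rw [show 2*m'+2 = (2*m'+1)+1 from by omega, Finset.sum_range_succ'] at hA2
  norm_num at hA2
  -- hA2 : 2 * S (2m'+3) = ∑ k ∈ range (2m'+1), (term at k+1+1)
  have hA3 : 2 * S (2*m'+3) = (2*(m':ℝ)+3) * (2*(m':ℝ)+2)
      * ∑ k ∈ range (2*m'+1),
        (-1:ℝ)^k * Jr^(2*m'+1-k) * ((2*m'+1).choose k) * T k := by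
    rw [hA2, Finset.mul_sum]
    refine Finset.sum_congr rfl fun k hk => ?_
    have hsub : 2*m'+1+1+1 - (k+1+1) = 2*m'+1-k := by omega
    have hTsub : k+1+1-2 = k := by omega
    have hneg : (-1:ℝ)^(k+1+1) = (-1:ℝ)^k := by rw [pow_succ, pow_succ]; ring
    have hcast : (((2*m'+3).choose (k+2)) : ℝ) * ((k:ℝ)+2) * ((k:ℝ)+1)
        = (2*(m':ℝ)+3) * ((2*(m':ℝ)+2) * (((2*m'+1).choose k) : ℝ)) := by
      have h := congrArg (Nat.cast : ℕ → ℝ) (lmm_choose_aux m' k)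
      push_cast at h
      linarith [h]
    rw [hsub, hTsub, hneg]
    push_cast
    have h32 : k+1+1 = k+2 := by omega
    rw [h32]
    linear_combination ((-1:ℝ)^k * Jr^(2*m'+1-k) * T k) * hcast
  rw [← hB] at hA3
  linarith

/-- A symmetric linear multistep method has even algebraic order: if the error
coefficients `C_0, ..., C_{2m}` all vanish, then so does `C_{2m+1}`. -/
theorem symmetric_lmm_even_order (J m : ℕ) (a b : ℕ → ℝ)
    (hsym_a : ∀ j ≤ J, a j = a (J - j))
    (hsym_b : ∀ j ≤ J, b j = b (J - j))
    (C : ℕ → ℝ)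
    (hC0 : C 0 = ∑ j ∈ range (J + 1), a j)
    (hC1 : C 1 = ∑ j ∈ range (J + 1), (j : ℝ) * a j)
    (hCq : ∀ q : ℕ, 2 ≤ q →
      C q = (1 / (Nat.factorial q : ℝ)) * ∑ j ∈ range (J + 1), (j : ℝ) ^ q * a j
          - (1 / (Nat.factorial (q - 2) : ℝ)) * ∑ j ∈ range (J + 1), (j : ℝ) ^ (q - 2) * b j)
    (hvanish : ∀ i ≤ 2 * m, C i = 0) :
    C (2 * m + 1) = 0 := by
  -- binomial expansion of ((J:ℝ) - x)^q
  have hbinom : ∀ (q : ℕ) (x : ℝ), ((J:ℝ) - x)^q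
      = ∑ k ∈ range (q+1), (-1:ℝ)^k * (J:ℝ)^(q-k) * (q.choose k) * x^k := by
    intro q x
    rw [sub_pow, ← Finset.sum_range_reflect
      (fun k => (-1:ℝ)^k * (J:ℝ)^(q-k) * (q.choose k) * x^k) (q+1)]
    refine Finset.sum_congr rfl fun k hk => ?_
    have hkq : k ≤ q := Nat.lt_succ_iff.mp (mem_range.mp hk)
    have h1 : q + 1 - 1 - k = q - k := by omega
    have h2 : q - (q - k) = k := by omega
    have h3 : (-1:ℝ)^(k+q) = (-1:ℝ)^(q-k) := by
      have h4 : k + q = (q - k) + 2*k := by omega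
      rw [h4, pow_add, pow_mul]; norm_num
    rw [h1, h2, Nat.choose_symm hkq, h3]
    ring
  -- key identity from symmetry
  have key : ∀ (c : ℕ → ℝ), (∀ j ≤ J, c j = c (J - j)) → ∀ q : ℕ,
      (∑ j ∈ range (J+1), (j:ℝ)^q * c j)
      = ∑ k ∈ range (q+1), (-1:ℝ)^k * (J:ℝ)^(q-k) * (q.choose k)
          * ∑ j ∈ range (J+1), (j:ℝ)^k * c j := by
    intro c hc q
    have hrefl : ∑ j ∈ range (J+1), (j:ℝ)^q * c j
        = ∑ j ∈ range (J+1), ((J:ℝ) - (j:ℝ))^q * c j := by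
      rw [← Finset.sum_range_reflect (fun j => ((J:ℝ) - (j:ℝ))^q * c j) (J+1)]
      refine Finset.sum_congr rfl fun j hj => ?_
      have hjJ : j ≤ J := Nat.lt_succ_iff.mp (mem_range.mp hj)
      have h1 : J + 1 - 1 - j = J - j := by omega
      rw [h1, Nat.cast_sub hjJ, ← hc j hjJ, sub_sub_cancel]
    rw [hrefl]
    simp_rw [hbinom, Finset.sum_mul]
    rw [Finset.sum_comm]
    refine Finset.sum_congr rfl fun k _ => ?_
    rw [Finset.mul_sum]
    exact Finset.sum_congr rfl fun j _ => by ring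
  have hS0 : ∑ j ∈ range (J+1), (j:ℝ)^0 * a j = 0 := by
    have h := hvanish 0 (by omega)
    rw [hC0] at h
    simpa using h
  rcases Nat.eq_zero_or_pos m with hm | hm
  · -- m = 0 : C 1 = S 1 and S 1 = -S 1
    subst hm
    have hk := key a hsym_a 1
    rw [Finset.sum_range_succ _ 1, Finset.sum_range_one, hS0] at hk
    norm_num at hk
    norm_num
    rw [hC1]
    have h1 : ∑ j ∈ range (J+1), (j:ℝ) * a j
        = ∑ j ∈ range (J+1), (j:ℝ)^1 * a j := by simp
    rw [h1]
    linarith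
  · obtain ⟨m', rfl⟩ : ∃ m', m = m' + 1 := ⟨m - 1, by omega⟩
    have hS1 : ∑ j ∈ range (J+1), (j:ℝ)^1 * a j = 0 := by
      have h := hvanish 1 (by omega)
      rw [hC1] at h
      rw [show ∑ j ∈ range (J+1), (j:ℝ)^1 * a j
        = ∑ j ∈ range (J+1), (j:ℝ) * a j from by simp]
      exact h
    have hSk : ∀ k, 2 ≤ k → k ≤ 2*m'+2 →
        (∑ j ∈ range (J+1), (j:ℝ)^k * a j)
          = (k:ℝ)*((k:ℝ)-1) * (∑ j ∈ range (J+1), (j:ℝ)^(k-2) * b j) := by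
      intro k h2 hkm
      obtain ⟨l, rfl⟩ : ∃ l, k = l + 2 := ⟨k - 2, by omega⟩
      have h := hvanish (l+2) (by omega)
      rw [hCq (l+2) (by omega)] at h
      rw [show l+2-2 = l from by omega] at h ⊢
      have hfac : ((l+2).factorial : ℝ) = ((l:ℝ)+2)*((l:ℝ)+1)*(l.factorial) := by
        rw [show l + 2 = l + 1 + 1 from rfl, Nat.factorial_succ, Nat.factorial_succ]
        push_cast; ring
      have hfne : (l.factorial : ℝ) ≠ 0 := Nat.cast_ne_zero.mpr l.factorial_ne_zero
      have hpne : ((l:ℝ)+2)*((l:ℝ)+1) ≠ 0 := by positivity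
      rw [hfac] at h
      have h6 : (∑ j ∈ range (J+1), (j:ℝ)^(l+2) * a j)
          = ((l:ℝ)+2)*((l:ℝ)+1) * (∑ j ∈ range (J+1), (j:ℝ)^l * b j) := by
        field_simp at h
        apply mul_right_cancel₀ hfne
        linear_combination (l.factorial : ℝ) * h
      rw [h6]
      push_cast
      ring
    have hST := lmm_aux (J:ℝ) m'
      (fun q => ∑ j ∈ range (J+1), (j:ℝ)^q * a j)
      (fun q => ∑ j ∈ range (J+1), (j:ℝ)^q * b j)
      (key a hsym_a (2*m'+3)) (key b hsym_b (2*m'+1)) hS0 hS1 hSk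
    -- conclude
    rw [show 2*(m'+1)+1 = 2*m'+3 from by ring]
    have hCfin := hCq (2*m'+3) (by omega)
    rw [show 2*m'+3-2 = 2*m'+1 from by omega] at hCfin
    rw [hCfin, hST]
    have hfac3 : ((2*m'+3).factorial : ℝ)
        = (2*(m':ℝ)+3) * (2*(m':ℝ)+2) * (((2*m'+1).factorial : ℝ)) := by
      rw [show 2*m'+3 = (2*m'+1)+1+1 from rfl, Nat.factorial_succ, Nat.factorial_succ]
      push_cast; ring
    have hfne : (((2*m'+1).factorial : ℝ)) ≠ 0 := Nat.cast_ne_zero.mpr (Nat.factorial_ne_zero _)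
    rw [hfac3]
    have h2 : (2*(m':ℝ)+3) ≠ 0 := by positivity
    have h3 : (2*(m':ℝ)+2) ≠ 0 := by positivity
    field_simp
    ring
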